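/- Let k ≥ 2, m ≥ 1 and let (A,B) be a sorted pair of m-element subsets of {1,…,k}. Then: (i) if k ∈ B \ A, the pair (ρ(B), ρ(A)) is sorted, and otherwise the pair (ρ(A), ρ(B)) is sorted; (ii) if 1 ∈ A \ B, the pair (σ(A), σ(B)) is sorted, and otherwise the pair (σ(B), σ(A)) is sorted. Here ρ(X) and σ(X) denote the images of a set X under ρ and σ respectively. -/

import Mathlib

open Finset

attribute [local instance] Classical.propDecidable

noncomputable section

/-- `π` is a permutation of `{1,…,k-1}` given in one-line notation
(`π p` is the entry at position `p`), normalized to `0` outside `[1,k-1]`. -/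
def OneLine (k : ℕ) (π : ℕ → ℕ) : Prop :=
  Set.BijOn π (Set.Icc 1 (k - 1)) (Set.Icc 1 (k - 1)) ∧
    ∀ p, p ∉ Set.Icc 1 (k - 1) → π p = 0

/-- The set `S(π)` of adjacent inversions of `π`:
those `i ∈ [1,k-2]` such that `i+1` appears before `i` in `π`. -/
def adjInvF (k : ℕ) (π : ℕ → ℕ) : Finset ℕ :=
  (Finset.Icc 1 (k - 2)).filter fun i =>
    ∃ p ∈ Finset.Icc 1 (k - 1), ∃ r ∈ Finset.Icc 1 (k - 1),
      p < r ∧ π p = i + 1 ∧ π r = i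

/-- `W^π_{k,q}`: weakly increasing `(k-1)`-tuples with entries in `[0,q-1]`
that are strictly increasing at every adjacent inversion of `π`
(vectors are functions `ℕ → ℕ` supported on `[1,k-1]`). -/
def W (k q : ℕ) (π : ℕ → ℕ) : Set (ℕ → ℕ) :=
  {v | (∀ i, i ∉ Finset.Icc 1 (k - 1) → v i = 0) ∧
       (∀ i ∈ Finset.Icc 1 (k - 1), v i ≤ q - 1) ∧
       (∀ i, 1 ≤ i → i + 1 ≤ k - 1 → v i ≤ v (i + 1)) ∧
       (∀ i ∈ adjInvF k π, v i < v (i + 1))}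

/-- `x + e_{π_a} + e_{π_{a+1}} + ⋯ + e_{π_{b-1}}`. -/
def shift (π : ℕ → ℕ) (a b : ℕ) (x : ℕ → ℕ) : ℕ → ℕ :=
  fun i => x i + if i ∈ (Finset.Icc a (b - 1)).image π then 1 else 0

/-- Adjacency in the graph `G^π_{k,q}`: one vertex is obtained from the other
by adding `e_{π_a} + ⋯ + e_{π_{b-1}}` for some `1 ≤ a < b ≤ k`. -/
def AdjRel (k : ℕ) (π : ℕ → ℕ) (x y : ℕ → ℕ) : Prop :=
  ∃ a b, 1 ≤ a ∧ a < b ∧ b ≤ k ∧ (y = shift π a b x ∨ x = shift π a b y)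

/-- The number of maximal blocks of consecutive integers of a finite set `T ⊆ ℕ`. -/
def numBlocks (T : Finset ℕ) : ℕ := (T.filter fun t => t + 1 ∉ T).card

/-- `cs_i(π)`: the number of pairs `1 ≤ a < b ≤ k` such that
`T_{a,b} = {π_a,…,π_{b-1}}` decomposes into exactly `i` maximal blocks
of consecutive integers. -/
def cs (k : ℕ) (π : ℕ → ℕ) (i : ℕ) : ℕ :=
  ((Finset.Icc 1 k ×ˢ Finset.Icc 1 k).filter fun p =>
    p.1 < p.2 ∧ numBlocks ((Finset.Icc p.1 (p.2 - 1)).image π) = i).card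

/-- For `i < j`, `{i,j}` is an edge of `G_π` iff `{i,i+1,…,j-1}` occurs as
a set of consecutive entries of `π`. -/
def GpiEdge (k : ℕ) (π : ℕ → ℕ) (i j : ℕ) : Prop :=
  ∃ a, 1 ≤ a ∧ a + (j - i) ≤ k ∧
    (Finset.Icc a (a + (j - i) - 1)).image π = Finset.Icc i (j - 1)

/-- Unordered adjacency in `G_π`. -/
def GpiAdjU (k : ℕ) (π : ℕ → ℕ) (i j : ℕ) : Prop :=
  (i < j ∧ GpiEdge k π i j) ∨ (j < i ∧ GpiEdge k π j i)

/-- The position of the value `v` in the one-line notation of `π`. -/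
def posOf (k : ℕ) (π : ℕ → ℕ) (v : ℕ) : ℕ :=
  if h : ((Finset.Icc 1 (k - 1)).filter fun t => π t = v).Nonempty then
    ((Finset.Icc 1 (k - 1)).filter fun t => π t = v).min' h
  else 0

/-- The rotation `r` on one-line permutations: if `π = π₁…π_{t-1}(k-1)π_{t+1}…π_{k-1}`,
then `r(π) = (π_{t+1}+1)…(π_{k-1}+1) 1 (π₁+1)…(π_{t-1}+1)`. -/
def rot (k : ℕ) (π : ℕ → ℕ) : ℕ → ℕ := fun p =>
  if p ∉ Finset.Icc 1 (k - 1) then 0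
  else if p < k - posOf k π (k - 1) then π (posOf k π (k - 1) + p) + 1
  else if p = k - posOf k π (k - 1) then 1
  else π (p - (k - posOf k π (k - 1))) + 1

/-- The reflection `s` on one-line permutations: if `π = π₁…π_{i-1} 1 π_{i+1}…π_{k-1}`,
then `s(π) = (k+1-π_{i-1})…(k+1-π₁) 1 (k+1-π_{k-1})…(k+1-π_{i+1})`. -/
def srefl (k : ℕ) (π : ℕ → ℕ) : ℕ → ℕ := fun p =>
  if p ∉ Finset.Icc 1 (k - 1) then 0
  else if p < posOf k π 1 then k + 1 - π (posOf k π 1 - p)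
  else if p = posOf k π 1 then 1
  else k + 1 - π (k + posOf k π 1 - p)

/-- The rotation `ρ` of the vertex set `{1,…,k}`. -/
def rotV (k i : ℕ) : ℕ := if i < k then i + 1 else 1

/-- The reflection `σ` of the vertex set `{1,…,k}`. -/
def sreflV (k i : ℕ) : ℕ := if i = 1 then 1 else k + 2 - i

/-- The maximal sorted family `(S₁,…,S_k)` associated with `σ`, `0`-indexed:
`sortedFam k σ (i-1) = S_i`. -/
def sortedFam (k : ℕ) (σ : ℕ → ℕ) : ℕ → Finset ℕ
  | 0 => insert 1 ((adjInvF k σ).image (· + 1))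
  | j + 1 => insert (σ (j + 1) + 1) ((sortedFam k σ j).erase (σ (j + 1)))

/-- `ear(π)`. -/
def ear (k : ℕ) (π : ℕ → ℕ) : ℕ :=
  ((Finset.Icc 1 (k - 2)).filter fun i => π (i + 1) = π i + 1 ∨ π i = π (i + 1) + 1).card
    + (({1, k - 1} : Finset ℕ) ∩ ({π 1, π (k - 1)} : Finset ℕ)).card

/-- `ε_i(π) = 1` if `i-1 ∈ S(π)` and `0` otherwise. -/
def eps (k : ℕ) (π : ℕ → ℕ) (i : ℕ) : ℕ := if i - 1 ∈ adjInvF k π then 1 else 0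

/-- Extension of a vector with the conventions `x_k = q-1` (`x₀ = 0` holds by
the normalization of vectors in `W^π_{k,q}`). -/
def xext (k q : ℕ) (x : ℕ → ℕ) (i : ℕ) : ℕ := if i = k then q - 1 else x i

/-- The label list `L^π(x) = {i ∈ [1,k] : x_{i-1} < x_i - ε_i(π)}`. -/
def labels (k q : ℕ) (π : ℕ → ℕ) (x : ℕ → ℕ) : Finset ℕ :=
  (Finset.Icc 1 k).filter fun i => xext k q x (i - 1) + eps k π i < xext k q x i

/-- A Sperner labeling of `G^π_{k,q}`. -/
def IsSperner (k q : ℕ) (π : ℕ → ℕ) (f : (ℕ → ℕ) → ℕ) : Prop :=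
  (∀ x ∈ W k q π, f x = 0 ∨ f x ∈ labels k q π x) ∧
  (∀ x ∈ W k q π, ∀ y ∈ W k q π, AdjRel k π x y → f x = f y ∨ f x = 0 ∨ f y = 0)

/-- The entry `w` appears between the entries `u` and `v` in `π`. -/
def Between (k : ℕ) (π : ℕ → ℕ) (u v w : ℕ) : Prop :=
  (posOf k π u < posOf k π w ∧ posOf k π w < posOf k π v) ∨
  (posOf k π v < posOf k π w ∧ posOf k π w < posOf k π u)

/-- A good set of colors for `π`. -/
def GoodSet (k : ℕ) (π : ℕ → ℕ) (C : Finset ℕ) : Prop :=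
  C ⊆ Finset.Icc 1 k ∧
  (∀ i ∈ C, ∀ j ∈ C, i ≠ j → ¬ GpiAdjU k π i j) ∧
  (∀ a ∈ C, ∀ b ∈ C, 1 < a → a < b → b < k →
      ((Between k π (a - 1) b a ∨ Between k π (a - 1) b (b - 1)) ∧
       (Between k π (b - 1) a (a - 1) ∨ Between k π (b - 1) a b))) ∧
  (1 ∈ C → ∀ b ∈ C, b ≠ 1 → Between k π 1 (b - 1) b) ∧
  (k ∈ C → ∀ b ∈ C, b ≠ k → Between k π b (k - 1) (b - 1))

/-- `x_a - x_{a-1} - ε_a(π)`, the `a`-th coordinate of the distance map `D`. -/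
def dval (k q : ℕ) (π : ℕ → ℕ) (x : ℕ → ℕ) (a : ℕ) : ℕ :=
  xext k q x a - xext k q x (a - 1) - eps k π a

/-- The distance coloring determined by a set of colors `C`:
`x` gets color `a ∈ C` if `dval x a` is the unique maximum of `dval x` on `C`,
and `0` otherwise. -/
def dcol (k q : ℕ) (π : ℕ → ℕ) (C : Finset ℕ) (x : ℕ → ℕ) : ℕ :=
  if h : ∃ a ∈ C, ∀ b ∈ C, b ≠ a → dval k q π x b < dval k q π x a then h.choose else 0

/-- `(A,B)` is a sorted pair of `m`-element sets: `a₁ ≤ b₁ ≤ a₂ ≤ b₂ ≤ ⋯ ≤ a_m ≤ b_m`. -/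
def SortedPair (m : ℕ) (A B : Finset ℕ) : Prop :=
  ∃ (hA : A.card = m) (hB : B.card = m),
    ∀ i : Fin m,
      A.orderEmbOfFin hA i ≤ B.orderEmbOfFin hB i ∧
        ∀ h : (i : ℕ) + 1 < m,
          (B.orderEmbOfFin hB i : ℕ) ≤ A.orderEmbOfFin hA ⟨(i : ℕ) + 1, h⟩


lemma myL {m : ℕ} {A : Finset ℕ} (hA : A.card = m) (i : Fin m) (t : ℕ) :
    A.orderEmbOfFin hA i ≤ t ↔ (i : ℕ) < (A.filter (· ≤ t)).card := by
  set f := A.orderEmbOfFin hA with hf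
  constructor
  · intro h
    have hsub : (Finset.Iic i).image f ⊆ A.filter (· ≤ t) := by
      intro x hx
      simp only [Finset.mem_image, Finset.mem_Iic] at hx
      obtain ⟨j, hj, rfl⟩ := hx
      exact Finset.mem_filter.2 ⟨Finset.orderEmbOfFin_mem A hA j,
        le_trans (f.monotone hj) h⟩
    have hc := Finset.card_le_card hsub
    rw [Finset.card_image_of_injective _ f.injective, Fin.card_Iic] at hc
    omega
  · intro h
    by_contra hlt
    push_neg at hlt
    have hsub : A.filter (· ≤ t) ⊆ (Finset.Iio i).image f := by
      intro x hx
      rw [Finset.mem_filter] at hx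
      have hx' : x ∈ Set.range f := by
        rw [hf, Finset.range_orderEmbOfFin]; exact hx.1
      obtain ⟨j, rfl⟩ := hx'
      have : j < i := by
        rw [← f.lt_iff_lt]; exact lt_of_le_of_lt hx.2 hlt
      exact Finset.mem_image.2 ⟨j, Finset.mem_Iio.2 this, rfl⟩
    have hc := Finset.card_le_card hsub
    rw [Finset.card_image_of_injective _ f.injective, Fin.card_Iio] at hc
    omega

lemma sp_iff {m : ℕ} {A B : Finset ℕ} :
    SortedPair m A B ↔ A.card = m ∧ B.card = m ∧
      ∀ t, (B.filter (· ≤ t)).card ≤ (A.filter (· ≤ t)).card ∧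
           (A.filter (· ≤ t)).card ≤ (B.filter (· ≤ t)).card + 1 := by
  constructor
  · rintro ⟨hA, hB, h⟩
    refine ⟨hA, hB, fun t => ⟨?_, ?_⟩⟩
    · by_contra hc
      push_neg at hc
      have hBm : (B.filter (· ≤ t)).card ≤ m := hB ▸ Finset.card_le_card (Finset.filter_subset _ _)
      set i : Fin m := ⟨(A.filter (· ≤ t)).card, by omega⟩
      have hb : B.orderEmbOfFin hB i ≤ t := (myL hB i t).2 hc
      have ha : A.orderEmbOfFin hA i ≤ t := le_trans (h i).1 hb
      have := (myL hA i t).1 ha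
      simp [i] at this
    · by_contra hc
      push_neg at hc
      have hAm : (A.filter (· ≤ t)).card ≤ m := hA ▸ Finset.card_le_card (Finset.filter_subset _ _)
      have hlt : (B.filter (· ≤ t)).card + 1 < m := by omega
      set j : Fin m := ⟨(B.filter (· ≤ t)).card, by omega⟩
      have ha : A.orderEmbOfFin hA ⟨(j : ℕ) + 1, hlt⟩ ≤ t :=
        (myL hA ⟨(j : ℕ) + 1, hlt⟩ t).2 (by simp [j]; omega)
      have hb : B.orderEmbOfFin hB j ≤ t := le_trans ((h j).2 hlt) ha
      have := (myL hB j t).1 hb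
      simp [j] at this
  · rintro ⟨hA, hB, h⟩
    refine ⟨hA, hB, fun i => ⟨?_, fun hsucc => ?_⟩⟩
    · have h1 : (i : ℕ) < (B.filter (· ≤ B.orderEmbOfFin hB i)).card :=
        (myL hB i _).1 le_rfl
      exact (myL hA i _).2 (lt_of_lt_of_le h1 (h _).1)
    · have h1 : ((i : ℕ) + 1) < (A.filter (· ≤ A.orderEmbOfFin hA ⟨(i:ℕ)+1, hsucc⟩)).card :=
        (myL hA ⟨(i:ℕ)+1, hsucc⟩ _).1 le_rfl
      have h2 := (h (A.orderEmbOfFin hA ⟨(i:ℕ)+1, hsucc⟩)).2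
      exact (myL hB i _).2 (by omega)

lemma img_filter_card {X : Finset ℕ} {g : ℕ → ℕ}
    (hg : ∀ x ∈ X, ∀ y ∈ X, g x = g y → x = y) (t : ℕ) :
    ((X.image g).filter (· ≤ t)).card = (X.filter (fun x => g x ≤ t)).card := by
  rw [← Finset.card_image_of_injOn (f := g) (fun x hx y hy =>
    hg x (Finset.mem_coe.1 (Finset.coe_subset.2 (Finset.filter_subset _ _) hx))
        y (Finset.mem_coe.1 (Finset.coe_subset.2 (Finset.filter_subset _ _) hy)))]
  congr 1
  ext y
  simp only [Finset.mem_filter, Finset.mem_image]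
  constructor
  · rintro ⟨⟨x, hx, rfl⟩, hy⟩
    exact ⟨x, ⟨hx, hy⟩, rfl⟩
  · rintro ⟨x, ⟨hx, hy⟩, rfl⟩
    exact ⟨⟨x, hx, rfl⟩, hy⟩

lemma cnt_rot {k t : ℕ} (hk : 2 ≤ k) {X : Finset ℕ} (hX : X ⊆ Finset.Icc 1 k)
    (ht1 : 1 ≤ t) (ht2 : t < k) :
    (X.filter (fun x => rotV k x ≤ t)).card
      = (X.filter (· ≤ t - 1)).card + (if k ∈ X then 1 else 0) := by
  by_cases hkX : k ∈ X
  · rw [if_pos hkX]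
    have he : X.filter (fun x => rotV k x ≤ t) = insert k (X.filter (· ≤ t - 1)) := by
      ext x
      simp only [Finset.mem_filter, Finset.mem_insert]; simp only [rotV]
      constructor
      · rintro ⟨hxX, hle⟩
        have hxb := Finset.mem_Icc.1 (hX hxX)
        split_ifs at hle with h
        · right; exact ⟨hxX, by omega⟩
        · left; omega
      · intro hx
        rcases hx with h | ⟨hxX, hxt⟩
        · refine ⟨h ▸ hkX, ?_⟩
          rw [h, if_neg (lt_irrefl k)]; omega
        · have hxb := Finset.mem_Icc.1 (hX hxX)
          exact ⟨hxX, by rw [if_pos (show x < k by omega)]; omega⟩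
    rw [he, Finset.card_insert_of_notMem (by simp; omega)]
  · rw [if_neg hkX, Nat.add_zero]
    congr 1
    apply Finset.filter_congr
    intro x hxX
    have hxb := Finset.mem_Icc.1 (hX hxX)
    have hxk : x ≠ k := fun h => hkX (h ▸ hxX)
    simp only [rotV, if_pos (show x < k by omega)]
    omega

lemma cnt_srefl {k t : ℕ} (hk : 2 ≤ k) {X : Finset ℕ} (hX : X ⊆ Finset.Icc 1 k)
    (ht1 : 1 ≤ t) (ht2 : t ≤ k - 1) :
    (X.filter (fun x => sreflV k x ≤ t)).card + (X.filter (· ≤ k + 1 - t)).card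
      = X.card + (if 1 ∈ X then 1 else 0) := by
  have he : X.filter (fun x => sreflV k x ≤ t)
      = X.filter (fun x => x = 1 ∨ ¬ x ≤ k + 1 - t) := by
    apply Finset.filter_congr
    intro x hxX
    have hxb := Finset.mem_Icc.1 (hX hxX)
    simp only [sreflV]
    split_ifs with h
    · simp; omega
    · simp; omega
  have h1 : (X.filter (fun x => x = 1)).card = if 1 ∈ X then 1 else 0 := by
    rw [Finset.filter_eq']; split_ifs <;> simp
  have h2 : (X.filter (fun x => ¬ x ≤ k + 1 - t)).card + (X.filter (· ≤ k + 1 - t)).card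
      = X.card := by
    have h3 := Finset.card_filter_add_card_filter_not
      (s := X) (p := fun x => x ≤ k + 1 - t)
    omega
  have hd : Disjoint (X.filter (fun x => x = 1)) (X.filter (fun x => ¬ x ≤ k + 1 - t)) := by
    rw [Finset.disjoint_left]
    intro a ha hb
    simp only [Finset.mem_filter] at ha hb
    omega
  rw [he, Finset.filter_or, Finset.card_union_of_disjoint hd, h1]
  omega

lemma rot_sorted {k m : ℕ} (hk : 2 ≤ k) {X Y : Finset ℕ}
    (hX : X ⊆ Finset.Icc 1 k) (hY : Y ⊆ Finset.Icc 1 k)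
    (hcX : X.card = m) (hcY : Y.card = m)
    (hyp : ∀ s, (Y.filter (· ≤ s)).card + (if k ∈ Y then 1 else 0)
        ≤ (X.filter (· ≤ s)).card + (if k ∈ X then 1 else 0) ∧
        (X.filter (· ≤ s)).card + (if k ∈ X then 1 else 0)
        ≤ (Y.filter (· ≤ s)).card + (if k ∈ Y then 1 else 0) + 1) :
    SortedPair m (X.image (rotV k)) (Y.image (rotV k)) := by
  have hinj : ∀ (Z : Finset ℕ), Z ⊆ Finset.Icc 1 k →
      ∀ x ∈ Z, ∀ y ∈ Z, rotV k x = rotV k y → x = y := by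
    intro Z hZ x hx y hy h
    have h1 := Finset.mem_Icc.1 (hZ hx)
    have h2 := Finset.mem_Icc.1 (hZ hy)
    simp only [rotV] at h
    split_ifs at h <;> omega
  have cardX : (X.image (rotV k)).card = m := by
    rw [Finset.card_image_of_injOn (fun x hx y hy =>
      hinj X hX x (Finset.mem_coe.1 hx) y (Finset.mem_coe.1 hy)), hcX]
  have cardY : (Y.image (rotV k)).card = m := by
    rw [Finset.card_image_of_injOn (fun x hx y hy =>
      hinj Y hY x (Finset.mem_coe.1 hx) y (Finset.mem_coe.1 hy)), hcY]
  refine sp_iff.2 ⟨cardX, cardY, fun t => ?_⟩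
  rw [img_filter_card (hinj X hX) t, img_filter_card (hinj Y hY) t]
  rcases Nat.lt_or_ge t 1 with ht | ht
  · have hzero : ∀ (Z : Finset ℕ), (Z.filter (fun x => rotV k x ≤ t)).card = 0 := by
      intro Z
      rw [Finset.card_eq_zero, Finset.filter_eq_empty_iff]
      intro x _
      simp only [rotV]
      split_ifs <;> omega
    rw [hzero X, hzero Y]
    omega
  rcases Nat.lt_or_ge t k with htk | htk
  · rw [cnt_rot hk hX ht htk, cnt_rot hk hY ht htk]
    exact hyp (t - 1)
  · have hfull : ∀ (Z : Finset ℕ), Z ⊆ Finset.Icc 1 k → Z.card = m →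
        (Z.filter (fun x => rotV k x ≤ t)).card = m := by
      intro Z hZ hcZ
      rw [Finset.filter_true_of_mem, hcZ]
      intro x hx
      have := Finset.mem_Icc.1 (hZ hx)
      simp only [rotV]
      split_ifs <;> omega
    rw [hfull X hX hcX, hfull Y hY hcY]
    omega

lemma srefl_sorted {k m : ℕ} (hk : 2 ≤ k) {X Y : Finset ℕ}
    (hX : X ⊆ Finset.Icc 1 k) (hY : Y ⊆ Finset.Icc 1 k)
    (hcX : X.card = m) (hcY : Y.card = m)
    (hyp : ∀ s, (X.filter (· ≤ s)).card + (if 1 ∈ Y then 1 else 0)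
        ≤ (Y.filter (· ≤ s)).card + (if 1 ∈ X then 1 else 0) ∧
        (Y.filter (· ≤ s)).card + (if 1 ∈ X then 1 else 0)
        ≤ (X.filter (· ≤ s)).card + (if 1 ∈ Y then 1 else 0) + 1) :
    SortedPair m (X.image (sreflV k)) (Y.image (sreflV k)) := by
  have hinj : ∀ (Z : Finset ℕ), Z ⊆ Finset.Icc 1 k →
      ∀ x ∈ Z, ∀ y ∈ Z, sreflV k x = sreflV k y → x = y := by
    intro Z hZ x hx y hy h
    have h1 := Finset.mem_Icc.1 (hZ hx)
    have h2 := Finset.mem_Icc.1 (hZ hy)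
    simp only [sreflV] at h
    split_ifs at h <;> omega
  have cardX : (X.image (sreflV k)).card = m := by
    rw [Finset.card_image_of_injOn (fun x hx y hy =>
      hinj X hX x (Finset.mem_coe.1 hx) y (Finset.mem_coe.1 hy)), hcX]
  have cardY : (Y.image (sreflV k)).card = m := by
    rw [Finset.card_image_of_injOn (fun x hx y hy =>
      hinj Y hY x (Finset.mem_coe.1 hx) y (Finset.mem_coe.1 hy)), hcY]
  refine sp_iff.2 ⟨cardX, cardY, fun t => ?_⟩
  rw [img_filter_card (hinj X hX) t, img_filter_card (hinj Y hY) t]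
  rcases Nat.lt_or_ge t 1 with ht | ht
  · have hzero : ∀ (Z : Finset ℕ), Z ⊆ Finset.Icc 1 k →
        (Z.filter (fun x => sreflV k x ≤ t)).card = 0 := by
      intro Z hZ
      rw [Finset.card_eq_zero, Finset.filter_eq_empty_iff]
      intro x hx
      have := Finset.mem_Icc.1 (hZ hx)
      simp only [sreflV]
      split_ifs <;> omega
    rw [hzero X hX, hzero Y hY]
    omega
  rcases Nat.lt_or_ge t k with htk | htk
  · have e1 := cnt_srefl hk hX ht (show t ≤ k - 1 by omega)
    have e2 := cnt_srefl hk hY ht (show t ≤ k - 1 by omega)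
    have h3 := hyp (k + 1 - t)
    rw [hcX] at e1
    rw [hcY] at e2
    omega
  · have hfull : ∀ (Z : Finset ℕ), Z ⊆ Finset.Icc 1 k → Z.card = m →
        (Z.filter (fun x => sreflV k x ≤ t)).card = m := by
      intro Z hZ hcZ
      rw [Finset.filter_true_of_mem, hcZ]
      intro x hx
      have := Finset.mem_Icc.1 (hZ hx)
      simp only [sreflV]
      split_ifs <;> omega
    rw [hfull X hX hcX, hfull Y hY hcY]
    omega


theorem stmt12 (k m : ℕ) (hk : 2 ≤ k) (hm : 1 ≤ m) (A B : Finset ℕ)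
    (hA : A ⊆ Finset.Icc 1 k) (hB : B ⊆ Finset.Icc 1 k)
    (hs : SortedPair m A B) :
    (if k ∈ B ∧ k ∉ A then SortedPair m (B.image (rotV k)) (A.image (rotV k))
      else SortedPair m (A.image (rotV k)) (B.image (rotV k))) ∧
    (if 1 ∈ A ∧ 1 ∉ B then SortedPair m (A.image (sreflV k)) (B.image (sreflV k))
      else SortedPair m (B.image (sreflV k)) (A.image (sreflV k))) := by
  obtain ⟨hcA, hcB, hcnt⟩ := sp_iff.1 hs
  have hAb : ∀ x ∈ A, 1 ≤ x ∧ x ≤ k := fun x hx => Finset.mem_Icc.1 (hA hx)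
  have hBb : ∀ x ∈ B, 1 ≤ x ∧ x ≤ k := fun x hx => Finset.mem_Icc.1 (hB hx)
  have fact1 : k ∈ A → k ∈ B := by
    intro hkA
    by_contra hkB
    have h1 := (hcnt (k - 1)).1
    have hBfull : (B.filter (· ≤ k - 1)).card = m := by
      rw [Finset.filter_true_of_mem, hcB]
      intro x hx
      have hb := hBb x hx
      have hne : x ≠ k := fun h => hkB (h ▸ hx)
      omega
    have hAlt : (A.filter (· ≤ k - 1)).card < m := by
      have hss : A.filter (· ≤ k - 1) ⊂ A :=
        (Finset.ssubset_iff_of_subset (Finset.filter_subset _ _)).2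
          ⟨k, hkA, by simp only [Finset.mem_filter, not_and]; intro _; omega⟩
      have := Finset.card_lt_card hss
      omega
    omega
  have fact2 : 1 ∈ B → 1 ∈ A := by
    intro h1B
    have h1 := (hcnt 1).1
    have hpos : 0 < (B.filter (· ≤ 1)).card :=
      Finset.card_pos.2 ⟨1, Finset.mem_filter.2 ⟨h1B, le_rfl⟩⟩
    have hApos : 0 < (A.filter (· ≤ 1)).card := by omega
    obtain ⟨a, ha⟩ := Finset.card_pos.1 hApos
    rw [Finset.mem_filter] at ha
    have hab := hAb a ha.1
    have : a = 1 := by omega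
    exact this ▸ ha.1
  constructor
  · by_cases h1 : k ∈ B ∧ k ∉ A
    · rw [if_pos h1]
      refine rot_sorted hk hB hA hcB hcA (fun s => ?_)
      have := hcnt s
      rw [if_pos h1.1, if_neg h1.2]
      omega
    · rw [if_neg h1]
      refine rot_sorted hk hA hB hcA hcB (fun s => ?_)
      have := hcnt s
      by_cases hkA : k ∈ A
      · rw [if_pos hkA, if_pos (fact1 hkA)]
        omega
      · have hkB : k ∉ B := fun hb => h1 ⟨hb, hkA⟩
        rw [if_neg hkA, if_neg hkB]
        omega
  · by_cases h2 : 1 ∈ A ∧ 1 ∉ B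
    · rw [if_pos h2]
      refine srefl_sorted hk hA hB hcA hcB (fun s => ?_)
      have := hcnt s
      rw [if_pos h2.1, if_neg h2.2]
      omega
    · rw [if_neg h2]
      refine srefl_sorted hk hB hA hcB hcA (fun s => ?_)
      have := hcnt s
      by_cases h1B : 1 ∈ B
      · rw [if_pos h1B, if_pos (fact2 h1B)]
        omega
      · have h1A : 1 ∉ A := fun ha => h2 ⟨ha, h1B⟩
        rw [if_neg h1B, if_neg h1A]
        omega

end
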